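/- Let x be a bounded operator on a Hilbert space with x + x* ≥ 0. For every t > 0, the operator tx(I + tx)⁻¹ satisfies ‖I - tx(I + tx)⁻¹‖ ≤ 1, and tx(I + tx)⁻¹ · (1/t) converges in norm to x as t → 0⁺. Consequently x lies in the norm closure of ℝ⁺·{a ∈ B(H) : ‖I - a‖ ≤ 1}. -/

import Mathlib

open ContinuousLinearMap


local notation "⟪" x ", " y "⟫" => @inner ℂ _ _ x y

lemma aux_unit {H : Type*} [NormedAddCommGroup H] [InnerProductSpace ℂ H]
    [CompleteSpace H] (y : H →L[ℂ] H)
    (hy : ∀ v : H, 0 ≤ RCLike.re ⟪y v, v⟫)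
    (hy' : ∀ v : H, 0 ≤ RCLike.re ⟪(adjoint y) v, v⟫) :
    ∃ u : (H →L[ℂ] H)ˣ, (u : H →L[ℂ] H) = 1 + y ∧
      ∀ w : H, ‖((u⁻¹ : (H →L[ℂ] H)ˣ) : H →L[ℂ] H) w‖ ≤ ‖w‖ := by
  set T : H →L[ℂ] H := 1 + y with hT
  have lowbd : ∀ (z : H →L[ℂ] H), (∀ v, 0 ≤ RCLike.re ⟪z v, v⟫) → ∀ v : H, ‖v‖ ≤ ‖(1 + z) v‖ := by
    intro z hz v
    have h1 : ‖v‖ ^ 2 ≤ RCLike.re ⟪(1 + z) v, v⟫ := by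
      have h : RCLike.re ⟪(1 + z) v, v⟫ = RCLike.re ⟪v, v⟫ + RCLike.re ⟪z v, v⟫ := by
        simp [inner_add_left]
      rw [h, inner_self_eq_norm_sq (𝕜 := ℂ)]
      linarith [hz v]
    have h2 := re_inner_le_norm (𝕜 := ℂ) ((1 + z) v) v
    rcases eq_or_lt_of_le (norm_nonneg v) with hv | hv
    · simp [← hv]
    · have : ‖v‖ * ‖v‖ ≤ ‖(1 + z) v‖ * ‖v‖ := by nlinarith
      exact le_of_mul_le_mul_right this hv
  have hTlow : ∀ v : H, ‖v‖ ≤ ‖T v‖ := lowbd y hy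
  have hTadj : adjoint T = 1 + adjoint y := by
    rw [hT, map_add]; congr 1
    rw [← star_eq_adjoint, star_one]
  have hTalow : ∀ v : H, ‖v‖ ≤ ‖(adjoint T) v‖ := by
    rw [hTadj]; exact lowbd _ hy'
  have hanti : AntilipschitzWith 1 T :=
    T.antilipschitz_of_bound (by simpa using hTlow)
  have hker : T.ker = ⊥ := LinearMap.ker_eq_bot.mpr hanti.injective
  have hclosed : IsClosed (T.range : Set H) :=
    hanti.isClosed_range T.uniformContinuous
  have : CompleteSpace (T.range : Submodule ℂ H) := hclosed.completeSpace_coe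
  have hrange : T.range = ⊤ := by
    rw [← Submodule.orthogonal_eq_bot_iff, Submodule.eq_bot_iff]
    intro v hv
    have hv' : ∀ u : H, ⟪T u, v⟫ = 0 := fun u => hv _ ⟨u, rfl⟩
    have hz : adjoint T v = 0 := by
      have h0 : ⟪adjoint T v, adjoint T v⟫ = 0 := by
        rw [adjoint_inner_right]; exact hv' _
      rwa [inner_self_eq_zero] at h0
    have h1 := hTalow v
    rw [hz, norm_zero] at h1
    exact norm_le_zero_iff.mp h1
  let e := ContinuousLinearEquiv.ofBijective T hker hrange
  have he : ∀ w : H, T w = e w := fun _ => rfl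
  have h1 : T * (e.symm : H →L[ℂ] H) = 1 := by
    ext w
    change e (e.symm w) = w
    exact e.apply_symm_apply w
  have h2 : (e.symm : H →L[ℂ] H) * T = 1 := by
    ext w
    change e.symm (e w) = w
    exact e.symm_apply_apply w
  refine ⟨⟨T, (e.symm : H →L[ℂ] H), h1, h2⟩, rfl, fun w => ?_⟩
  calc ‖(e.symm : H →L[ℂ] H) w‖ ≤ ‖T ((e.symm : H →L[ℂ] H) w)‖ := hTlow _
    _ = ‖w‖ := by rw [he, ContinuousLinearEquiv.coe_coe, e.apply_symm_apply]


set_option maxHeartbeats 1000000 in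
/-- If `x ∈ B(H)` has `x + x* ≥ 0`, then for every `t > 0` the operator
`t x (I + t x)⁻¹` lies in `𝔉 = {a : ‖I - a‖ ≤ 1}`, and `(1/t)·(t x (I + t x)⁻¹)`
converges in norm to `x` as `t → 0⁺`.  Consequently `x` lies in the norm
closure of `ℝ⁺ · 𝔉`. -/
theorem stmt5 {H : Type*} [NormedAddCommGroup H] [InnerProductSpace ℂ H]
    [CompleteSpace H] (x : H →L[ℂ] H) (hx : (x + adjoint x).IsPositive) :
    (∀ t : ℝ, 0 < t →
        ‖1 - ((t : ℂ) • x) * Ring.inverse (1 + (t : ℂ) • x)‖ ≤ 1) ∧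
    Filter.Tendsto
      (fun t : ℝ => ((t : ℂ))⁻¹ • (((t : ℂ) • x) * Ring.inverse (1 + (t : ℂ) • x)))
      (nhdsWithin 0 (Set.Ioi 0)) (nhds x) ∧
    x ∈ closure {z : H →L[ℂ] H |
      ∃ (t : ℝ) (a : H →L[ℂ] H), 0 ≤ t ∧ ‖1 - a‖ ≤ 1 ∧ z = (t : ℂ) • a} := by
  have hre : ∀ v : H, 0 ≤ RCLike.re (⟪x v, v⟫ : ℂ) := by
    intro v
    have h := hx.2 v
    rw [reApplyInnerSelf_apply, add_apply, inner_add_left, map_add, adjoint_inner_left] at h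
    have e := inner_re_symm (𝕜 := ℂ) v (x v)
    linarith
  have hre' : ∀ v : H, 0 ≤ RCLike.re (⟪(adjoint x) v, v⟫ : ℂ) := by
    intro v
    have e1 : (⟪(adjoint x) v, v⟫ : ℂ) = ⟪v, x v⟫ := adjoint_inner_left x v v
    rw [e1, inner_re_symm (𝕜 := ℂ)]
    exact hre v
  have key : ∀ t : ℝ, 0 < t → ∃ u : (H →L[ℂ] H)ˣ,
      (u : H →L[ℂ] H) = 1 + (t : ℂ) • x ∧
      Ring.inverse (1 + (t : ℂ) • x) = ((u⁻¹ : (H →L[ℂ] H)ˣ) : H →L[ℂ] H) ∧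
      ∀ w : H, ‖((u⁻¹ : (H →L[ℂ] H)ˣ) : H →L[ℂ] H) w‖ ≤ ‖w‖ := by
    intro t ht
    have hs : ∀ v : H, 0 ≤ RCLike.re ⟪((t : ℂ) • x) v, v⟫ := by
      intro v
      rw [smul_apply, inner_smul_left, Complex.conj_ofReal, RCLike.re_to_complex,
        Complex.re_ofReal_mul]
      exact mul_nonneg ht.le (hre v)
    have hadj : adjoint ((t : ℂ) • x) = (t : ℂ) • adjoint x := by
      rw [← star_eq_adjoint, ← star_eq_adjoint, star_smul, Complex.star_def,
        Complex.conj_ofReal]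
    have hs' : ∀ v : H, 0 ≤ RCLike.re ⟪(adjoint ((t : ℂ) • x)) v, v⟫ := by
      intro v
      rw [hadj, smul_apply, inner_smul_left, Complex.conj_ofReal, RCLike.re_to_complex,
        Complex.re_ofReal_mul]
      exact mul_nonneg ht.le (hre' v)
    obtain ⟨u, hu1, hu2⟩ := aux_unit _ hs hs'
    exact ⟨u, hu1, by rw [← hu1, Ring.inverse_unit], hu2⟩
  have part1 : ∀ t : ℝ, 0 < t →
      ‖1 - ((t : ℂ) • x) * Ring.inverse (1 + (t : ℂ) • x)‖ ≤ 1 := by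
    intro t ht
    obtain ⟨u, hu1, hu2, hu3⟩ := key t ht
    have hmi := u.mul_inv
    rw [hu1, add_mul, one_mul] at hmi
    have hmul : ((t : ℂ) • x) * ((u⁻¹ : (H →L[ℂ] H)ˣ) : H →L[ℂ] H)
        = 1 - ((u⁻¹ : (H →L[ℂ] H)ˣ) : H →L[ℂ] H) := eq_sub_of_add_eq' hmi
    rw [hu2, hmul, sub_sub_cancel]
    exact opNorm_le_bound _ zero_le_one (fun w => by simpa using hu3 w)
  have hbd : ∀ t ∈ Set.Ioi (0 : ℝ),
      ‖((t : ℂ))⁻¹ • (((t : ℂ) • x) * Ring.inverse (1 + (t : ℂ) • x)) - x‖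
        ≤ t * (‖x‖ * ‖x‖) := by
    intro t ht
    rw [Set.mem_Ioi] at ht
    obtain ⟨u, hu1, hu2, hu3⟩ := key t ht
    have hc : (t : ℂ) ≠ 0 := Complex.ofReal_ne_zero.mpr ht.ne'
    have hnu : ‖((u⁻¹ : (H →L[ℂ] H)ˣ) : H →L[ℂ] H)‖ ≤ 1 :=
      opNorm_le_bound _ zero_le_one (fun w => by simpa using hu3 w)
    have hmi := u.mul_inv
    rw [hu1, add_mul, one_mul] at hmi
    have hf : ((t : ℂ))⁻¹ • (((t : ℂ) • x) * Ring.inverse (1 + (t : ℂ) • x))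
        = x * ((u⁻¹ : (H →L[ℂ] H)ˣ) : H →L[ℂ] H) := by
      rw [hu2, smul_mul_assoc, smul_smul, inv_mul_cancel₀ hc, one_smul]
    rw [hf]
    have hdiff : x * ((u⁻¹ : (H →L[ℂ] H)ˣ) : H →L[ℂ] H) - x
        = -(x * (((t : ℂ) • x) * ((u⁻¹ : (H →L[ℂ] H)ˣ) : H →L[ℂ] H))) := by
      have h1 : ((u⁻¹ : (H →L[ℂ] H)ˣ) : H →L[ℂ] H) - 1
          = -(((t : ℂ) • x) * ((u⁻¹ : (H →L[ℂ] H)ˣ) : H →L[ℂ] H)) := by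
        rw [eq_sub_of_add_eq' hmi, neg_sub]
      calc x * ((u⁻¹ : (H →L[ℂ] H)ˣ) : H →L[ℂ] H) - x
          = x * (((u⁻¹ : (H →L[ℂ] H)ˣ) : H →L[ℂ] H) - 1) := by rw [mul_sub, mul_one]
        _ = -(x * (((t : ℂ) • x) * ((u⁻¹ : (H →L[ℂ] H)ˣ) : H →L[ℂ] H))) := by
            rw [h1, mul_neg]
    rw [hdiff, norm_neg]
    calc ‖x * (((t : ℂ) • x) * ((u⁻¹ : (H →L[ℂ] H)ˣ) : H →L[ℂ] H))‖
        ≤ ‖x‖ * ‖((t : ℂ) • x) * ((u⁻¹ : (H →L[ℂ] H)ˣ) : H →L[ℂ] H)‖ := norm_mul_le _ _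
      _ ≤ ‖x‖ * (‖(t : ℂ) • x‖ * ‖((u⁻¹ : (H →L[ℂ] H)ˣ) : H →L[ℂ] H)‖) := by
          gcongr; exact norm_mul_le _ _
      _ ≤ ‖x‖ * (‖(t : ℂ) • x‖ * 1) := by gcongr
      _ = t * (‖x‖ * ‖x‖) := by
          rw [norm_smul, Complex.norm_real, Real.norm_of_nonneg ht.le]; ring
  have h2 : Filter.Tendsto
      (fun t : ℝ => ((t : ℂ))⁻¹ • (((t : ℂ) • x) * Ring.inverse (1 + (t : ℂ) • x)))
      (nhdsWithin 0 (Set.Ioi 0)) (nhds x) := by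
    rw [tendsto_iff_norm_sub_tendsto_zero]
    apply squeeze_zero' (Filter.eventually_of_mem self_mem_nhdsWithin
      (fun t _ => norm_nonneg _))
      (Filter.eventually_of_mem self_mem_nhdsWithin hbd)
    have : Filter.Tendsto (fun t : ℝ => t * (‖x‖ * ‖x‖)) (nhds 0)
        (nhds (0 * (‖x‖ * ‖x‖))) := (continuous_id.mul continuous_const).tendsto 0
    rw [zero_mul] at this
    exact this.mono_left nhdsWithin_le_nhds
  refine ⟨part1, h2, mem_closure_of_tendsto h2 ?_⟩
  filter_upwards [self_mem_nhdsWithin] with t ht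
  rw [Set.mem_Ioi] at ht
  exact ⟨t⁻¹, ((t : ℂ) • x) * Ring.inverse (1 + (t : ℂ) • x),
    inv_nonneg.mpr ht.le, part1 t ht, by rw [Complex.ofReal_inv]⟩
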